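/- For the G₂ polytopes P(k, l) ⊂ ℝ⁶_{≥0} defined by the seven inequalities p₅ ≤ l, p₆ ≤ k, p₂+p₃+p₆ ≤ k+l, p₃+p₄+p₆ ≤ k+l, p₄+p₅+p₆ ≤ k+l, p₁+p₂+p₃+p₄+p₅ ≤ k+2l, p₂+p₃+p₄+p₅+p₆ ≤ k+2l, the set of lattice points of P(k+k', l+l') equals the Minkowski sum of the sets of lattice points of P(k, l) and of P(k', l'), for all non-negative integers k, l, k', l'. -/
import Mathlib


open scoped Pointwise

/-- The set of lattice points of the `G₂` polytope `P(k, l) ⊂ ℝ⁶_{≥0}`. -/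
def latticeG2 (k l : ℕ) : Set (Fin 6 → ℤ) :=
  {p | (∀ i, 0 ≤ p i) ∧
    p 4 ≤ (l : ℤ) ∧ p 5 ≤ (k : ℤ) ∧
    p 1 + p 2 + p 5 ≤ (k : ℤ) + l ∧
    p 2 + p 3 + p 5 ≤ (k : ℤ) + l ∧
    p 3 + p 4 + p 5 ≤ (k : ℤ) + l ∧
    p 0 + p 1 + p 2 + p 3 + p 4 ≤ (k : ℤ) + 2 * l ∧
    p 1 + p 2 + p 3 + p 4 + p 5 ≤ (k : ℤ) + 2 * l}

private lemma keyA (k l : ℕ) (p0 p1 p2 p3 p4 p5 : ℤ)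
    (h0 : 0 ≤ p0) (h1 : 0 ≤ p1) (h2 : 0 ≤ p2) (h3 : 0 ≤ p3) (h4 : 0 ≤ p4) (h5 : 0 ≤ p5)
    (m4 : p4 ≤ (l : ℤ)) (m5 : p5 ≤ (k : ℤ) + 1)
    (ma : p1 + p2 + p5 ≤ (k : ℤ) + 1 + l)
    (mb : p2 + p3 + p5 ≤ (k : ℤ) + 1 + l)
    (mc : p3 + p4 + p5 ≤ (k : ℤ) + 1 + l)
    (md : p0 + p1 + p2 + p3 + p4 ≤ (k : ℤ) + 1 + 2 * l)
    (me : p1 + p2 + p3 + p4 + p5 ≤ (k : ℤ) + 1 + 2 * l) :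
    ∃ q0 q1 q2 q3 q4 q5 : ℤ,
      0 ≤ q0 ∧ 0 ≤ q1 ∧ 0 ≤ q2 ∧ 0 ≤ q3 ∧ 0 ≤ q4 ∧ 0 ≤ q5 ∧
      q0 ≤ p0 ∧ q1 ≤ p1 ∧ q2 ≤ p2 ∧ q3 ≤ p3 ∧ q4 ≤ p4 ∧ q5 ≤ p5 ∧
      q4 ≤ 0 ∧ q5 ≤ 1 ∧ q1 + q2 + q5 ≤ 1 ∧ q2 + q3 + q5 ≤ 1 ∧ q3 + q4 + q5 ≤ 1 ∧
      q0 + q1 + q2 + q3 + q4 ≤ 1 ∧ q1 + q2 + q3 + q4 + q5 ≤ 1 ∧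
      p4 - q4 ≤ (l : ℤ) ∧ p5 - q5 ≤ (k : ℤ) ∧
      (p1 - q1) + (p2 - q2) + (p5 - q5) ≤ (k : ℤ) + l ∧
      (p2 - q2) + (p3 - q3) + (p5 - q5) ≤ (k : ℤ) + l ∧
      (p3 - q3) + (p4 - q4) + (p5 - q5) ≤ (k : ℤ) + l ∧
      (p0 - q0) + (p1 - q1) + (p2 - q2) + (p3 - q3) + (p4 - q4) ≤ (k : ℤ) + 2 * l ∧
      (p1 - q1) + (p2 - q2) + (p3 - q3) + (p4 - q4) + (p5 - q5) ≤ (k : ℤ) + 2 * l := by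
  by_cases h1 : (k:ℤ) < p5
  · -- h1 true
    by_cases h2 : (k:ℤ) + 2 * l < p0 + p1 + p2 + p3 + p4
    · -- h2 true
      exact ⟨1, 0, 0, 0, 0, 1, by omega⟩
    · -- h2 false
      exact ⟨0, 0, 0, 0, 0, 1, by omega⟩
  · -- h1 false
    by_cases h3 : ((k:ℤ) + l < p3 + p4 + p5) ∨ ((k:ℤ) + l < p2 + p3 + p5 ∧ p2 = 0) ∨ (((k:ℤ) + 2 * l < p1 + p2 + p3 + p4 + p5) ∧ ¬((k:ℤ) + l < p1 + p2 + p5) ∧ ¬((k:ℤ) + l < p2 + p3 + p5) ∧ ¬((k:ℤ) + l < p3 + p4 + p5) ∧ p1 = 0 ∧ p2 = 0)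
    · -- h3 true
      exact ⟨0, 0, 0, 1, 0, 0, by omega⟩
    · -- h3 false
      by_cases h4 : ((k:ℤ) + l < p2 + p3 + p5) ∨ ((k:ℤ) + l < p1 + p2 + p5 ∧ p1 = 0) ∨ (((k:ℤ) + 2 * l < p1 + p2 + p3 + p4 + p5) ∧ ¬((k:ℤ) + l < p1 + p2 + p5) ∧ ¬((k:ℤ) + l < p2 + p3 + p5) ∧ ¬((k:ℤ) + l < p3 + p4 + p5) ∧ p1 = 0 ∧ 1 ≤ p2)
      · -- h4 true
        exact ⟨0, 0, 1, 0, 0, 0, by omega⟩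
      · -- h4 false
        by_cases h5 : ((k:ℤ) + l < p1 + p2 + p5) ∨ (((k:ℤ) + 2 * l < p1 + p2 + p3 + p4 + p5) ∧ 1 ≤ p1)
        · -- h5 true
          exact ⟨0, 1, 0, 0, 0, 0, by omega⟩
        · -- h5 false
          by_cases h6 : (k:ℤ) + 2 * l < p0 + p1 + p2 + p3 + p4
          · -- h6 true
            exact ⟨1, 0, 0, 0, 0, 0, by omega⟩
          · -- h6 false
            exact ⟨0, 0, 0, 0, 0, 0, by omega⟩

private lemma keyB (k l : ℕ) (p0 p1 p2 p3 p4 p5 : ℤ)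
    (h0 : 0 ≤ p0) (h1 : 0 ≤ p1) (h2 : 0 ≤ p2) (h3 : 0 ≤ p3) (h4 : 0 ≤ p4) (h5 : 0 ≤ p5)
    (m4 : p4 ≤ (l : ℤ) + 1) (m5 : p5 ≤ (k : ℤ))
    (ma : p1 + p2 + p5 ≤ (k : ℤ) + l + 1)
    (mb : p2 + p3 + p5 ≤ (k : ℤ) + l + 1)
    (mc : p3 + p4 + p5 ≤ (k : ℤ) + l + 1)
    (md : p0 + p1 + p2 + p3 + p4 ≤ (k : ℤ) + 2 * l + 2)
    (me : p1 + p2 + p3 + p4 + p5 ≤ (k : ℤ) + 2 * l + 2) :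
    ∃ q0 q1 q2 q3 q4 : ℤ,
      0 ≤ q0 ∧ 0 ≤ q1 ∧ 0 ≤ q2 ∧ 0 ≤ q3 ∧ 0 ≤ q4 ∧
      q0 ≤ p0 ∧ q1 ≤ p1 ∧ q2 ≤ p2 ∧ q3 ≤ p3 ∧ q4 ≤ p4 ∧
      q4 ≤ 1 ∧ q1 + q2 ≤ 1 ∧ q2 + q3 ≤ 1 ∧ q3 + q4 ≤ 1 ∧
      q0 + q1 + q2 + q3 + q4 ≤ 2 ∧ q1 + q2 + q3 + q4 ≤ 2 ∧
      p4 - q4 ≤ (l : ℤ) ∧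
      (p1 - q1) + (p2 - q2) + p5 ≤ (k : ℤ) + l ∧
      (p2 - q2) + (p3 - q3) + p5 ≤ (k : ℤ) + l ∧
      (p3 - q3) + (p4 - q4) + p5 ≤ (k : ℤ) + l ∧
      (p0 - q0) + (p1 - q1) + (p2 - q2) + (p3 - q3) + (p4 - q4) ≤ (k : ℤ) + 2 * l ∧
      (p1 - q1) + (p2 - q2) + (p3 - q3) + (p4 - q4) + p5 ≤ (k : ℤ) + 2 * l := by
  by_cases h1 : (l:ℤ) < p4
  · -- h1 true
    by_cases h2 : ((k:ℤ) + l < p2 + p3 + p5) ∨ ((k:ℤ) + l < p1 + p2 + p5 ∧ p1 = 0)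
    · -- h2 true
      by_cases h3 : (k:ℤ) + 2 * l + 2 < p1 + p2 + p3 + p4 + p5
      · -- h3 true
        exact ⟨max (p0 + p1 + p2 + p3 + p4 - ((k:ℤ) + 2 * l) - 2) 0, 0, 1, 0, 1, by omega⟩
      · -- h3 false
        exact ⟨max (p0 + p1 + p2 + p3 + p4 - ((k:ℤ) + 2 * l) - 2) 0, 0, 1, 0, 1, by omega⟩
    · -- h2 false
      by_cases h4 : (k:ℤ) + l < p1 + p2 + p5
      · -- h4 true
        by_cases h5 : (k:ℤ) + 2 * l + 2 < p1 + p2 + p3 + p4 + p5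
        · -- h5 true
          by_cases h6 : 1 ≤ p3
          · -- h6 true
            exact ⟨max (p0 + p1 + p2 + p3 + p4 - ((k:ℤ) + 2 * l) - 3) 0, 1, 0, 1, 1, by omega⟩
          · -- h6 false
            exact ⟨max (p0 + p1 + p2 + p3 + p4 - ((k:ℤ) + 2 * l) - 2) 0, 1, 0, 0, 1, by omega⟩
        · -- h5 false
          exact ⟨max (p0 + p1 + p2 + p3 + p4 - ((k:ℤ) + 2 * l) - 2) 0, 1, 0, 0, 1, by omega⟩
      · -- h4 false
        by_cases h7 : (k:ℤ) + 2 * l + 1 < p1 + p2 + p3 + p4 + p5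
        · -- h7 true
          by_cases h8 : 1 ≤ p1
          · -- h8 true
            by_cases h9 : (k:ℤ) + 2 * l + 2 < p1 + p2 + p3 + p4 + p5
            · -- h9 true
              by_cases h10 : 1 ≤ p3
              · -- h10 true
                exact ⟨max (p0 + p1 + p2 + p3 + p4 - ((k:ℤ) + 2 * l) - 3) 0, 1, 0, 1, 1, by omega⟩
              · -- h10 false
                exact ⟨max (p0 + p1 + p2 + p3 + p4 - ((k:ℤ) + 2 * l) - 2) 0, 1, 0, 0, 1, by omega⟩
            · -- h9 false
              exact ⟨max (p0 + p1 + p2 + p3 + p4 - ((k:ℤ) + 2 * l) - 2) 0, 1, 0, 0, 1, by omega⟩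
          · -- h8 false
            by_cases h11 : (k:ℤ) + 2 * l + 2 < p1 + p2 + p3 + p4 + p5
            · -- h11 true
              exact ⟨max (p0 + p1 + p2 + p3 + p4 - ((k:ℤ) + 2 * l) - 2) 0, 0, 1, 0, 1, by omega⟩
            · -- h11 false
              exact ⟨max (p0 + p1 + p2 + p3 + p4 - ((k:ℤ) + 2 * l) - 2) 0, 0, 1, 0, 1, by omega⟩
        · -- h7 false
          by_cases h12 : (k:ℤ) + 2 * l + 1 < p1 + p2 + p3 + p4 + p5
          · -- h12 true
            by_cases h13 : 1 ≤ p3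
            · -- h13 true
              exact ⟨max (p0 + p1 + p2 + p3 + p4 - ((k:ℤ) + 2 * l) - 2) 0, 0, 0, 1, 1, by omega⟩
            · -- h13 false
              exact ⟨max (p0 + p1 + p2 + p3 + p4 - ((k:ℤ) + 2 * l) - 1) 0, 0, 0, 0, 1, by omega⟩
          · -- h12 false
            exact ⟨max (p0 + p1 + p2 + p3 + p4 - ((k:ℤ) + 2 * l) - 1) 0, 0, 0, 0, 1, by omega⟩
  · -- h1 false
    by_cases h14 : ((k:ℤ) + l < p3 + p4 + p5) ∨ ((k:ℤ) + l < p2 + p3 + p5 ∧ (p2 = 0 ∨ (p1 + p2 + p3 + p4 + p5 = (k:ℤ) + 2 * l + 2 ∧ 1 ≤ p3)))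
    · -- h14 true
      by_cases h15 : (k:ℤ) + l < p1 + p2 + p5 ∧ p1 = 0
      · -- h15 true
        by_cases h16 : (k:ℤ) + 2 * l + 2 < p1 + p2 + p3 + p4 + p5
        · -- h16 true
          exact ⟨max (p0 + p1 + p2 + p3 + p4 - ((k:ℤ) + 2 * l) - 3) 0, 0, 1, 1, 1, by omega⟩
        · -- h16 false
          exact ⟨max (p0 + p1 + p2 + p3 + p4 - ((k:ℤ) + 2 * l) - 2) 0, 0, 1, 1, 0, by omega⟩
      · -- h15 false
        by_cases h17 : (k:ℤ) + l < p1 + p2 + p5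
        · -- h17 true
          by_cases h18 : (k:ℤ) + 2 * l + 2 < p1 + p2 + p3 + p4 + p5
          · -- h18 true
            by_cases h19 : 1 ≤ p3
            · -- h19 true
              exact ⟨max (p0 + p1 + p2 + p3 + p4 - ((k:ℤ) + 2 * l) - 2) 0, 1, 0, 1, 0, by omega⟩
            · -- h19 false
              exact ⟨max (p0 + p1 + p2 + p3 + p4 - ((k:ℤ) + 2 * l) - 3) 0, 1, 0, 1, 1, by omega⟩
          · -- h18 false
            exact ⟨max (p0 + p1 + p2 + p3 + p4 - ((k:ℤ) + 2 * l) - 2) 0, 1, 0, 1, 0, by omega⟩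
        · -- h17 false
          by_cases h20 : (k:ℤ) + 2 * l + 1 < p1 + p2 + p3 + p4 + p5
          · -- h20 true
            by_cases h21 : 1 ≤ p1
            · -- h21 true
              by_cases h22 : (k:ℤ) + 2 * l + 2 < p1 + p2 + p3 + p4 + p5
              · -- h22 true
                by_cases h23 : 1 ≤ p3
                · -- h23 true
                  exact ⟨max (p0 + p1 + p2 + p3 + p4 - ((k:ℤ) + 2 * l) - 2) 0, 1, 0, 1, 0, by omega⟩
                · -- h23 false
                  exact ⟨max (p0 + p1 + p2 + p3 + p4 - ((k:ℤ) + 2 * l) - 3) 0, 1, 0, 1, 1, by omega⟩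
              · -- h22 false
                exact ⟨max (p0 + p1 + p2 + p3 + p4 - ((k:ℤ) + 2 * l) - 2) 0, 1, 0, 1, 0, by omega⟩
            · -- h21 false
              by_cases h24 : (k:ℤ) + 2 * l + 2 < p1 + p2 + p3 + p4 + p5
              · -- h24 true
                exact ⟨max (p0 + p1 + p2 + p3 + p4 - ((k:ℤ) + 2 * l) - 3) 0, 0, 1, 1, 1, by omega⟩
              · -- h24 false
                exact ⟨max (p0 + p1 + p2 + p3 + p4 - ((k:ℤ) + 2 * l) - 2) 0, 0, 1, 1, 0, by omega⟩
          · -- h20 false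
            by_cases h25 : (k:ℤ) + 2 * l + 1 < p1 + p2 + p3 + p4 + p5
            · -- h25 true
              by_cases h26 : 1 ≤ p3
              · -- h26 true
                exact ⟨max (p0 + p1 + p2 + p3 + p4 - ((k:ℤ) + 2 * l) - 1) 0, 0, 0, 1, 0, by omega⟩
              · -- h26 false
                exact ⟨max (p0 + p1 + p2 + p3 + p4 - ((k:ℤ) + 2 * l) - 2) 0, 0, 0, 1, 1, by omega⟩
            · -- h25 false
              exact ⟨max (p0 + p1 + p2 + p3 + p4 - ((k:ℤ) + 2 * l) - 1) 0, 0, 0, 1, 0, by omega⟩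
    · -- h14 false
      by_cases h27 : ((k:ℤ) + l < p2 + p3 + p5) ∨ ((k:ℤ) + l < p1 + p2 + p5 ∧ p1 = 0)
      · -- h27 true
        by_cases h28 : (k:ℤ) + 2 * l + 1 < p1 + p2 + p3 + p4 + p5
        · -- h28 true
          exact ⟨max (p0 + p1 + p2 + p3 + p4 - ((k:ℤ) + 2 * l) - 2) 0, 0, 1, 0, 1, by omega⟩
        · -- h28 false
          exact ⟨max (p0 + p1 + p2 + p3 + p4 - ((k:ℤ) + 2 * l) - 1) 0, 0, 1, 0, 0, by omega⟩
      · -- h27 false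
        by_cases h29 : (k:ℤ) + l < p1 + p2 + p5
        · -- h29 true
          by_cases h30 : (k:ℤ) + 2 * l + 1 < p1 + p2 + p3 + p4 + p5
          · -- h30 true
            by_cases h31 : 1 ≤ p3
            · -- h31 true
              exact ⟨max (p0 + p1 + p2 + p3 + p4 - ((k:ℤ) + 2 * l) - 2) 0, 1, 0, 1, 0, by omega⟩
            · -- h31 false
              exact ⟨max (p0 + p1 + p2 + p3 + p4 - ((k:ℤ) + 2 * l) - 2) 0, 1, 0, 0, 1, by omega⟩
          · -- h30 false
            exact ⟨max (p0 + p1 + p2 + p3 + p4 - ((k:ℤ) + 2 * l) - 1) 0, 1, 0, 0, 0, by omega⟩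
        · -- h29 false
          by_cases h32 : (k:ℤ) + 2 * l + 0 < p1 + p2 + p3 + p4 + p5
          · -- h32 true
            by_cases h33 : 1 ≤ p1
            · -- h33 true
              by_cases h34 : (k:ℤ) + 2 * l + 1 < p1 + p2 + p3 + p4 + p5
              · -- h34 true
                by_cases h35 : 1 ≤ p3
                · -- h35 true
                  exact ⟨max (p0 + p1 + p2 + p3 + p4 - ((k:ℤ) + 2 * l) - 2) 0, 1, 0, 1, 0, by omega⟩
                · -- h35 false
                  exact ⟨max (p0 + p1 + p2 + p3 + p4 - ((k:ℤ) + 2 * l) - 2) 0, 1, 0, 0, 1, by omega⟩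
              · -- h34 false
                exact ⟨max (p0 + p1 + p2 + p3 + p4 - ((k:ℤ) + 2 * l) - 1) 0, 1, 0, 0, 0, by omega⟩
            · -- h33 false
              by_cases h36 : (k:ℤ) + 2 * l + 1 < p1 + p2 + p3 + p4 + p5
              · -- h36 true
                exact ⟨max (p0 + p1 + p2 + p3 + p4 - ((k:ℤ) + 2 * l) - 2) 0, 0, 1, 0, 1, by omega⟩
              · -- h36 false
                exact ⟨max (p0 + p1 + p2 + p3 + p4 - ((k:ℤ) + 2 * l) - 1) 0, 0, 1, 0, 0, by omega⟩
          · -- h32 false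
            by_cases h37 : (k:ℤ) + 2 * l + 0 < p1 + p2 + p3 + p4 + p5
            · -- h37 true
              by_cases h38 : 1 ≤ p3
              · -- h38 true
                exact ⟨max (p0 + p1 + p2 + p3 + p4 - ((k:ℤ) + 2 * l) - 1) 0, 0, 0, 1, 0, by omega⟩
              · -- h38 false
                exact ⟨max (p0 + p1 + p2 + p3 + p4 - ((k:ℤ) + 2 * l) - 1) 0, 0, 0, 0, 1, by omega⟩
            · -- h37 false
              exact ⟨max (p0 + p1 + p2 + p3 + p4 - ((k:ℤ) + 2 * l) - 0) 0, 0, 0, 0, 0, by omega⟩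


private lemma supA (k l k' l' : ℕ) :
    latticeG2 k l + latticeG2 k' l' ⊆ latticeG2 (k + k') (l + l') := by
  rintro p ⟨x, ⟨xpos, x4, x5, xa, xb, xc, xd, xe⟩, y, ⟨ypos, y4, y5, ya, yb, yc, yd, ye⟩, rfl⟩
  refine ⟨fun i => add_nonneg (xpos i) (ypos i), ?_, ?_, ?_, ?_, ?_, ?_, ?_⟩ <;>
    · show _ ≤ _
      push_cast
      simp only [Pi.add_apply]
      omega

private lemma L00 : latticeG2 0 0 = 0 := by
  ext p
  constructor
  · rintro ⟨hpos, h4, h5, ha, hb, hc, hd, he⟩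
    have := hpos 0; have := hpos 1; have := hpos 2; have := hpos 3
    have := hpos 4; have := hpos 5
    have : p = 0 := by
      funext i
      fin_cases i
      · show p 0 = 0; omega
      · show p 1 = 0; omega
      · show p 2 = 0; omega
      · show p 3 = 0; omega
      · show p 4 = 0; omega
      · show p 5 = 0; omega
    simp [this]
  · intro hp
    simp only [Set.mem_zero] at hp
    subst hp
    refine ⟨fun i => le_refl 0, ?_, ?_, ?_, ?_, ?_, ?_, ?_⟩ <;> simp

private lemma stepA' (k l : ℕ) (p : Fin 6 → ℤ) (hp : p ∈ latticeG2 (k + 1) l) :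
    p ∈ latticeG2 k l + latticeG2 1 0 := by
  obtain ⟨hpos, h4, h5, ha, hb, hc, hd, he⟩ := hp
  push_cast at h4 h5 ha hb hc hd he
  obtain ⟨q0, q1, q2, q3, q4, q5, H⟩ :=
    keyA k l (p 0) (p 1) (p 2) (p 3) (p 4) (p 5)
      (hpos 0) (hpos 1) (hpos 2) (hpos 3) (hpos 4) (hpos 5)
      h4 h5 ha hb hc hd he
  obtain ⟨g0, g1, g2, g3, g4, g5, b0, b1, b2, b3, b4, b5,
    c4, c5, ca, cb, cc, cd, ce, r4, r5, ra, rb, rc, rd, re⟩ := H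
  set y : Fin 6 → ℤ := ![q0, q1, q2, q3, q4, q5] with hy
  refine ⟨p - y, ⟨?_, ?_, ?_, ?_, ?_, ?_, ?_, ?_⟩, y, ⟨?_, ?_, ?_, ?_, ?_, ?_, ?_, ?_⟩, ?_⟩
  · intro i
    fin_cases i
    · show 0 ≤ p 0 - q0; omega
    · show 0 ≤ p 1 - q1; omega
    · show 0 ≤ p 2 - q2; omega
    · show 0 ≤ p 3 - q3; omega
    · show 0 ≤ p 4 - q4; omega
    · show 0 ≤ p 5 - q5; omega
  · show p 4 - q4 ≤ _; exact r4
  · show p 5 - q5 ≤ _; exact r5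
  · show p 1 - q1 + (p 2 - q2) + (p 5 - q5) ≤ _; push_cast; omega
  · show p 2 - q2 + (p 3 - q3) + (p 5 - q5) ≤ _; push_cast; omega
  · show p 3 - q3 + (p 4 - q4) + (p 5 - q5) ≤ _; push_cast; omega
  · show p 0 - q0 + (p 1 - q1) + (p 2 - q2) + (p 3 - q3) + (p 4 - q4) ≤ _; push_cast; omega
  · show p 1 - q1 + (p 2 - q2) + (p 3 - q3) + (p 4 - q4) + (p 5 - q5) ≤ _; push_cast; omega
  · intro i
    fin_cases i
    · show 0 ≤ q0; omega
    · show 0 ≤ q1; omega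
    · show 0 ≤ q2; omega
    · show 0 ≤ q3; omega
    · show 0 ≤ q4; omega
    · show 0 ≤ q5; omega
  · show q4 ≤ _; push_cast; omega
  · show q5 ≤ _; push_cast; omega
  · show q1 + q2 + q5 ≤ _; push_cast; omega
  · show q2 + q3 + q5 ≤ _; push_cast; omega
  · show q3 + q4 + q5 ≤ _; push_cast; omega
  · show q0 + q1 + q2 + q3 + q4 ≤ _; push_cast; omega
  · show q1 + q2 + q3 + q4 + q5 ≤ _; push_cast; omega
  · exact sub_add_cancel p y

private lemma stepB' (k l : ℕ) (p : Fin 6 → ℤ) (hp : p ∈ latticeG2 k (l + 1)) :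
    p ∈ latticeG2 k l + latticeG2 0 1 := by
  obtain ⟨hpos, h4, h5, ha, hb, hc, hd, he⟩ := hp
  push_cast at h4 h5 ha hb hc hd he
  have ha' : p 1 + p 2 + p 5 ≤ (k : ℤ) + l + 1 := by omega
  have hb' : p 2 + p 3 + p 5 ≤ (k : ℤ) + l + 1 := by omega
  have hc' : p 3 + p 4 + p 5 ≤ (k : ℤ) + l + 1 := by omega
  have hd' : p 0 + p 1 + p 2 + p 3 + p 4 ≤ (k : ℤ) + 2 * l + 2 := by omega
  have he' : p 1 + p 2 + p 3 + p 4 + p 5 ≤ (k : ℤ) + 2 * l + 2 := by omega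
  obtain ⟨q0, q1, q2, q3, q4, H⟩ :=
    keyB k l (p 0) (p 1) (p 2) (p 3) (p 4) (p 5)
      (hpos 0) (hpos 1) (hpos 2) (hpos 3) (hpos 4) (hpos 5)
      (by omega) h5 ha' hb' hc' hd' he'
  have hp5 := hpos 5
  obtain ⟨g0, g1, g2, g3, g4, b0, b1, b2, b3, b4,
    c4, ca, cb, cc, cd, ce, r4, ra, rb, rc, rd, re⟩ := H
  set y : Fin 6 → ℤ := ![q0, q1, q2, q3, q4, 0] with hy
  refine ⟨p - y, ⟨?_, ?_, ?_, ?_, ?_, ?_, ?_, ?_⟩, y, ⟨?_, ?_, ?_, ?_, ?_, ?_, ?_, ?_⟩, ?_⟩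
  · intro i
    fin_cases i
    · show 0 ≤ p 0 - q0; omega
    · show 0 ≤ p 1 - q1; omega
    · show 0 ≤ p 2 - q2; omega
    · show 0 ≤ p 3 - q3; omega
    · show 0 ≤ p 4 - q4; omega
    · show 0 ≤ p 5 - 0; omega
  · show p 4 - q4 ≤ _; exact r4
  · show p 5 - 0 ≤ _; omega
  · show p 1 - q1 + (p 2 - q2) + (p 5 - 0) ≤ _; push_cast; omega
  · show p 2 - q2 + (p 3 - q3) + (p 5 - 0) ≤ _; push_cast; omega
  · show p 3 - q3 + (p 4 - q4) + (p 5 - 0) ≤ _; push_cast; omega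
  · show p 0 - q0 + (p 1 - q1) + (p 2 - q2) + (p 3 - q3) + (p 4 - q4) ≤ _; push_cast; omega
  · show p 1 - q1 + (p 2 - q2) + (p 3 - q3) + (p 4 - q4) + (p 5 - 0) ≤ _; push_cast; omega
  · intro i
    fin_cases i
    · show 0 ≤ q0; omega
    · show 0 ≤ q1; omega
    · show 0 ≤ q2; omega
    · show 0 ≤ q3; omega
    · show 0 ≤ q4; omega
    · show 0 ≤ (0:ℤ); omega
  · show q4 ≤ _; push_cast; omega
  · show (0:ℤ) ≤ _; norm_num
  · show q1 + q2 + 0 ≤ _; push_cast; omega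
  · show q2 + q3 + 0 ≤ _; push_cast; omega
  · show q3 + q4 + 0 ≤ _; push_cast; omega
  · show q0 + q1 + q2 + q3 + q4 ≤ _; push_cast; omega
  · show q1 + q2 + q3 + q4 + 0 ≤ _; push_cast; omega
  · exact sub_add_cancel p y

private lemma stepA (k l : ℕ) : latticeG2 (k + 1) l = latticeG2 k l + latticeG2 1 0 := by
  apply Set.eq_of_subset_of_subset
  · intro p hp; exact stepA' k l p hp
  · simpa using supA k l 1 0

private lemma stepB (k l : ℕ) : latticeG2 k (l + 1) = latticeG2 k l + latticeG2 0 1 := by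
  apply Set.eq_of_subset_of_subset
  · intro p hp; exact stepB' k l p hp
  · simpa using supA k l 0 1

private lemma main0 (k l l' : ℕ) :
    latticeG2 k (l + l') = latticeG2 k l + latticeG2 0 l' := by
  induction l' with
  | zero => rw [Nat.add_zero, L00, add_zero]
  | succ n ih =>
    rw [show l + (n + 1) = (l + n) + 1 from rfl, stepB, ih, stepB 0 n, add_assoc]

/-- the lattice points of the `G₂` polytope `P(k+k', l+l')` are
exactly the Minkowski sums of lattice points of `P(k, l)` and of `P(k', l')`. -/
theorem stmt12 (k l k' l' : ℕ) :
    latticeG2 (k + k') (l + l') = latticeG2 k l + latticeG2 k' l' := by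
  induction k' with
  | zero => rw [Nat.add_zero]; exact main0 k l l'
  | succ n ih =>
    rw [show k + (n + 1) = (k + n) + 1 from rfl, stepA, ih, stepA n l', add_assoc]
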